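/- Let Ω be a set, f: Ω → Ω, φ: Ω → ℝ^d, and Φ: Ω → ℝ^L injective, and let g: ℝ^d × ℝ^L → ℝ^L satisfy Φ(f(ω)) = g(φ(ω), Φ(ω)) for all ω ∈ Ω and be 1-Lipschitz in the norm ‖(u, y)‖ := ‖u‖ + ‖y‖, i.e., ‖g(u, y) − g(u', y')‖ ≤ ‖u − u'‖ + ‖y − y'‖ for all u, u', y, y'. Let r: ℝ^L → Φ(Ω) be a retraction (r(Φ(ω)) = Φ(ω) for all ω) that is κ-Lipschitz, κ ≥ 0. Define h := (φ, Φ), X := h(Ω), the extended feedback w̄ := (φ ∘ f) ∘ Φ^{−1} ∘ r : ℝ^L → ℝ^d, and 𝒯(u, y) := (w̄(y), g(u, y)). Fix ω₀ ∈ Ω and a constant C₀ ≥ 0 such that ‖φ(ω') − φ(ω₀)‖ ≤ C₀ ‖Φ(ω') − Φ(ω₀)‖ for all ω' ∈ Ω. Set z₀ := h(ω₀), and for δ₀ ∈ ℝ^L let z₀' := (φ(ω₀), Φ(ω₀) + δ₀). Then, setting ω₀' := Φ^{−1}(r(Φ(ω₀) + δ₀)), z₀'' := h(ω₀') ∈ X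 and z₁ := h(f(ω₀')) ∈ X, one has (measuring distances in ℝ^d × ℝ^L with the norm ‖(u, y)‖ = ‖u‖ + ‖y‖): (i) z₁ = 𝒯(z₀'') and ‖z₀'' − z₀‖ ≤ (1 + C₀) κ ‖δ₀‖; (ii) proj₁(𝒯(z₀')) = proj₁(z₁), i.e., 𝒯(z₀') is a Φ-perturbation of z₁, with ‖𝒯(z₀') − z₁‖ ≤ (1 + (1 + C₀) κ) ‖δ₀‖. -/

import Mathlib

open Filter Topology

/-- one-step perturbation lemma for the reconstructed system
𝒯(u, y) = (w̄(y), g(u, y)) with extended feedback w̄ = (φ ∘ f) ∘ Φ⁻¹ ∘ r.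
Distances in ℝ^d × ℝ^L are measured in the norm ‖(u, y)‖ = ‖u‖ + ‖y‖. -/
theorem one_step_perturbation {Ω : Type*} [Nonempty Ω] {d L : ℕ}
    (f : Ω → Ω) (φ : Ω → (Fin d → ℝ)) (Φ : Ω → (Fin L → ℝ))
    (hΦ : Function.Injective Φ)
    (g : (Fin d → ℝ) × (Fin L → ℝ) → (Fin L → ℝ))
    (hg_inv : ∀ ω : Ω, Φ (f ω) = g (φ ω, Φ ω))
    (hg_lip : ∀ (u u' : Fin d → ℝ) (y y' : Fin L → ℝ),
      ‖g (u, y) - g (u', y')‖ ≤ ‖u - u'‖ + ‖y - y'‖)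
    (r : (Fin L → ℝ) → (Fin L → ℝ)) (κ : ℝ) (hκ : 0 ≤ κ)
    (hr_range : ∀ y : Fin L → ℝ, r y ∈ Set.range Φ)
    (hr_retract : ∀ ω : Ω, r (Φ ω) = Φ ω)
    (hr_lip : ∀ y y' : Fin L → ℝ, ‖r y - r y'‖ ≤ κ * ‖y - y'‖)
    (ω₀ : Ω) (C₀ : ℝ) (hC₀ : 0 ≤ C₀)
    (hC : ∀ ω' : Ω, ‖φ ω' - φ ω₀‖ ≤ C₀ * ‖Φ ω' - Φ ω₀‖)
    (δ₀ : Fin L → ℝ) :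
    let wbar : (Fin L → ℝ) → (Fin d → ℝ) := fun y => φ (f (Function.invFun Φ (r y)))
    let T : (Fin d → ℝ) × (Fin L → ℝ) → (Fin d → ℝ) × (Fin L → ℝ) :=
      fun z => (wbar z.2, g z)
    let z₀ : (Fin d → ℝ) × (Fin L → ℝ) := (φ ω₀, Φ ω₀)
    let z₀' : (Fin d → ℝ) × (Fin L → ℝ) := (φ ω₀, Φ ω₀ + δ₀)
    let ω₀' : Ω := Function.invFun Φ (r (Φ ω₀ + δ₀))
    let z₀'' : (Fin d → ℝ) × (Fin L → ℝ) := (φ ω₀', Φ ω₀')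
    let z₁ : (Fin d → ℝ) × (Fin L → ℝ) := (φ (f ω₀'), Φ (f ω₀'))
    (z₁ = T z₀'' ∧
      ‖z₀''.1 - z₀.1‖ + ‖z₀''.2 - z₀.2‖ ≤ (1 + C₀) * κ * ‖δ₀‖) ∧
    ((T z₀').1 = z₁.1 ∧
      ‖(T z₀').1 - z₁.1‖ + ‖(T z₀').2 - z₁.2‖ ≤ (1 + (1 + C₀) * κ) * ‖δ₀‖) := by

  intro wbar T z₀ z₀' ω₀' z₀'' z₁
  have hΦω₀' : Φ ω₀' = r (Φ ω₀ + δ₀) := Function.invFun_eq (hr_range _)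
  have hΦΦ : ‖Φ ω₀' - Φ ω₀‖ ≤ κ * ‖δ₀‖ := by
    calc ‖Φ ω₀' - Φ ω₀‖ = ‖r (Φ ω₀ + δ₀) - r (Φ ω₀)‖ := by rw [hΦω₀', hr_retract]
      _ ≤ κ * ‖Φ ω₀ + δ₀ - Φ ω₀‖ := hr_lip _ _
      _ = κ * ‖δ₀‖ := by rw [add_sub_cancel_left]
  have hφφ : ‖φ ω₀' - φ ω₀‖ ≤ C₀ * (κ * ‖δ₀‖) :=
    (hC ω₀').trans (by nlinarith [norm_nonneg (Φ ω₀' - Φ ω₀)])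
  have hw : wbar (Φ ω₀') = φ (f ω₀') := by
    simp only [wbar, hr_retract ω₀', Function.leftInverse_invFun hΦ ω₀']
  have hz1 : z₁ = T z₀'' := by
    simp only [z₁, T, z₀'', hw, ← hg_inv]
  refine ⟨⟨hz1, ?_⟩, ?_, ?_⟩
  · simp only [z₀'', z₀]
    nlinarith [norm_nonneg δ₀]
  · simp only [T, z₀', z₁, wbar, hΦω₀']; rfl
  · have h1 : (T z₀').1 = z₁.1 := by simp only [T, z₀', z₁, wbar, hΦω₀']; rfl
    rw [h1, sub_self, norm_zero]
    have h2 : ‖(T z₀').2 - z₁.2‖ ≤ ‖φ ω₀ - φ ω₀'‖ + ‖Φ ω₀ + δ₀ - Φ ω₀'‖ := by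
      simp only [T, z₀', z₁, hg_inv ω₀']
      exact hg_lip _ _ _ _
    have h3 : ‖Φ ω₀ + δ₀ - Φ ω₀'‖ ≤ ‖δ₀‖ + ‖Φ ω₀' - Φ ω₀‖ := by
      have : Φ ω₀ + δ₀ - Φ ω₀' = δ₀ - (Φ ω₀' - Φ ω₀) := by abel
      rw [this]
      exact norm_sub_le _ _
    rw [norm_sub_rev (φ ω₀)] at h2
    nlinarith [norm_nonneg δ₀]
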